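/- Let g_q(x) = (1/(q−1))·[1 − ((1+√(1−x))/2)^q − ((1−√(1−x))/2)^q] for 0 ≤ x ≤ 1 and q > 1. Then for 2 ≤ q ≤ 3, g_q is monotonically nondecreasing on [0,1]. -/

import Mathlib

lemma key_mono (q : ℝ) (hq : 1 ≤ q) :
    MonotoneOn (fun u : ℝ => u ^ q + (1 - u) ^ q) (Set.Icc (1/2 : ℝ) 1) := by
  have hder : ∀ u : ℝ, HasDerivAt (fun u : ℝ => u ^ q + (1 - u) ^ q)
      (q * u ^ (q - 1) - q * (1 - u) ^ (q - 1)) u := by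
    intro u
    have h1 : HasDerivAt (fun u : ℝ => u ^ q) (q * u ^ (q - 1)) u := by
      simpa [mul_comm] using Real.hasDerivAt_rpow_const (p := q) (Or.inr hq)
    have h2 : HasDerivAt (fun u : ℝ => (1 - u) ^ q)
        ((q * (1 - u) ^ (q - 1)) * (-1)) u := by
      have hi : HasDerivAt (fun u : ℝ => 1 - u) (-1) u := by
        exact ((hasDerivAt_const u (1 : ℝ)).sub (hasDerivAt_id u)).congr_deriv (by ring)
      have ho : HasDerivAt (fun t : ℝ => t ^ q) (q * (1 - u) ^ (q - 1)) (1 - u) := by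
        simpa [mul_comm] using Real.hasDerivAt_rpow_const (p := q) (x := 1 - u) (Or.inr hq)
      exact ho.comp u hi
    exact (h1.add h2).congr_deriv (by ring)
  apply monotoneOn_of_deriv_nonneg (convex_Icc _ _)
  · exact fun u _ => (hder u).differentiableAt.continuousAt.continuousWithinAt
  · exact fun u _ => (hder u).differentiableAt.differentiableWithinAt
  · intro u hu
    rw [interior_Icc, Set.mem_Ioo] at hu
    rw [(hder u).deriv]
    have hle : (1 - u) ^ (q - 1) ≤ u ^ (q - 1) :=
      Real.rpow_le_rpow (by linarith) (by linarith) (by linarith)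
    have hq0 : (0:ℝ) ≤ q := by linarith
    nlinarith

theorem stmt_6 (q : ℝ) (hq2 : 2 ≤ q) (hq3 : q ≤ 3) :
    MonotoneOn (fun x : ℝ =>
      (1 / (q - 1)) * (1 - ((1 + Real.sqrt (1 - x)) / 2) ^ q
        - ((1 - Real.sqrt (1 - x)) / 2) ^ q))
      (Set.Icc (0 : ℝ) 1) := by
  intro x hx y hy hxy
  simp only [Set.mem_Icc] at hx hy
  set a := Real.sqrt (1 - y) with ha
  set b := Real.sqrt (1 - x) with hb
  have ha0 : 0 ≤ a := Real.sqrt_nonneg _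
  have hb0 : 0 ≤ b := Real.sqrt_nonneg _
  have ha1 : a ≤ 1 := Real.sqrt_le_one.mpr (by linarith)
  have hb1 : b ≤ 1 := Real.sqrt_le_one.mpr (by linarith)
  have hab : a ≤ b := Real.sqrt_le_sqrt (by linarith)
  have hkey := key_mono q (by linarith)
    (a := (1 + a) / 2) (b := (1 + b) / 2)
    ⟨by linarith, by linarith⟩ ⟨by linarith, by linarith⟩ (by linarith)
  simp only at hkey ⊢
  have e1 : (1 - a) / 2 = 1 - (1 + a) / 2 := by ring
  have e2 : (1 - b) / 2 = 1 - (1 + b) / 2 := by ring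
  rw [e1, e2]
  have hc : 0 ≤ 1 / (q - 1) := div_nonneg zero_le_one (by linarith)
  apply mul_le_mul_of_nonneg_left _ hc
  linarith
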